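/- Let z1, z2 be real numbers with z1 < 0 and z2 < 0, and let s ≥ 1 be a real number. Then the convergence factor of the Parareal/FIE-DR method with two splitting terms satisfies K_{FIE-DR}(z1, z2, s) = |(R_DR(z1/s, z2/s))^s − 1/((1 − z1)(1 − z2))| / (1 − |1/((1 − z1)(1 − z2))|) < 1, where R_DR(z1, z2) = 1 + (z1 + z2)/((1 − z1)(1 − z2)). -/

import Mathlib

/-- Convergence factor bound for the Parareal/FIE-DR method with two splitting terms. -/
theorem parareal_FIE_DR_conv_factor_two_terms
    (z1 z2 s : ℝ) (h1 : z1 < 0) (h2 : z2 < 0) (hs : 1 ≤ s) :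
    |(1 + (z1 / s + z2 / s) / ((1 - z1 / s) * (1 - z2 / s))) ^ s -
        1 / ((1 - z1) * (1 - z2))| /
      (1 - |1 / ((1 - z1) * (1 - z2))|) < 1 := by
  have hs0 : (0:ℝ) < s := by linarith
  have hu : z1 / s < 0 := div_neg_of_neg_of_pos h1 hs0
  have hv : z2 / s < 0 := div_neg_of_neg_of_pos h2 hs0
  set u := z1 / s with hudef
  set v := z2 / s with hvdef
  have huv : 0 < u * v := mul_pos_of_neg_of_neg hu hv
  have hP1 : (1:ℝ) < (1 - u) * (1 - v) := by nlinarith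
  have hP0 : (0:ℝ) < (1 - u) * (1 - v) := lt_trans one_pos hP1
  set R := 1 + (u + v) / ((1 - u) * (1 - v)) with hRdef
  have hReq : R = (1 + u * v) / ((1 - u) * (1 - v)) := by
    rw [hRdef, add_div' _ _ _ hP0.ne']; ring
  have hR0 : 0 < R := by
    rw [hReq]; exact div_pos (by linarith) hP0
  have hquot : (u + v) / ((1 - u) * (1 - v)) < 0 :=
    div_neg_of_neg_of_pos (by linarith) hP0
  have hR1 : R < 1 := by rw [hRdef]; linarith
  have hD1 : (1:ℝ) < (1 - z1) * (1 - z2) := by nlinarith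
  have hD0 : (0:ℝ) < (1 - z1) * (1 - z2) := lt_trans one_pos hD1
  set a := 1 / ((1 - z1) * (1 - z2)) with hadef
  have ha0 : 0 < a := by rw [hadef]; positivity
  have ha1 : a < 1 := by rw [hadef]; exact (div_lt_one hD0).mpr hD1
  have habs : |a| = a := abs_of_pos ha0
  rw [habs]
  have hden : 0 < 1 - a := by linarith
  rw [div_lt_one hden]
  -- Upper bound: R ^ s < 1
  have hup : R ^ s < 1 := Real.rpow_lt_one (le_of_lt hR0) hR1 hs0
  -- Lower bound: 2 * a - 1 < R ^ s
  have hlow : 2 * a - 1 < R ^ s := by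
    rcases le_or_gt ((1 - z1) * (1 - z2)) 2 with hD2 | hD2
    · -- use Bernoulli's inequality
      have hz : 0 < z1 * z2 := mul_pos_of_neg_of_neg h1 h2
      have hw : -1 < z1 + z2 := by nlinarith
      have hx1 : (-1:ℝ) ≤ u + v := by
        have huvq : u + v = (z1 + z2) / s := by rw [hudef, hvdef]; ring
        rw [huvq, le_div_iff₀ hs0]
        nlinarith
      have hbern : 1 + s * (u + v) ≤ (1 + (u + v)) ^ s :=
        one_add_mul_self_le_rpow_one_add hx1 hs
      have hsx : s * (u + v) = z1 + z2 := by
        rw [hudef, hvdef]; field_simp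
      have hRge : 1 + (u + v) ≤ R := by
        rw [hRdef]
        have : u + v ≤ (u + v) / ((1 - u) * (1 - v)) := by
          rw [le_div_iff₀ hP0]
          nlinarith [mul_nonneg (by linarith : (0:ℝ) ≤ -(u + v))
            (by linarith : (0:ℝ) ≤ (1 - u) * (1 - v) - 1)]
        linarith
      have h1x : (0:ℝ) ≤ 1 + (u + v) := by linarith
      have hmono : (1 + (u + v)) ^ s ≤ R ^ s :=
        Real.rpow_le_rpow h1x hRge (le_of_lt hs0)
      have h2D : 2 / ((1 - z1) * (1 - z2)) < 2 + (z1 + z2) := by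
        rw [div_lt_iff₀ hD0]
        nlinarith
      have hkey : 2 * a - 1 < 1 + (z1 + z2) := by
        have h2a : 2 * a = 2 / ((1 - z1) * (1 - z2)) := by rw [hadef]; ring
        linarith
      calc 2 * a - 1 < 1 + (z1 + z2) := hkey
        _ = 1 + s * (u + v) := by rw [hsx]
        _ ≤ (1 + (u + v)) ^ s := hbern
        _ ≤ R ^ s := hmono
    · have ha2 : a < 1 / 2 := by
        rw [hadef, div_lt_div_iff₀ hD0 (by norm_num : (0:ℝ) < 2)]
        linarith
      have : 2 * a - 1 < 0 := by linarith
      exact lt_of_lt_of_le this (le_of_lt (Real.rpow_pos_of_pos hR0 s))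
  rw [abs_lt]
  exact ⟨by linarith, by linarith⟩
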